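/- Let ψ denote the digamma function, i.e., ψ = deriv (fun x => Real.log (Real.Gamma x)). For all real α > 0 and β > 0, ψ(α + β) − ψ(α) ≤ Σ_{k=0}^{⌊β⌋} 1/(α + k). -/

import Mathlib

private lemma diffLG {x : ℝ} (hx : 0 < x) :
    DifferentiableAt ℝ (fun x => Real.log (Real.Gamma x)) x :=
  (Real.differentiableAt_Gamma fun m => ((neg_nonpos.mpr (Nat.cast_nonneg m)).trans_lt hx).ne').log
    (Real.Gamma_pos_of_pos hx).ne'

private lemma rec_step {x : ℝ} (hx : 0 < x) :
    deriv (fun x => Real.log (Real.Gamma x)) (x + 1)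
      = deriv (fun x => Real.log (Real.Gamma x)) x + 1 / x := by
  set f : ℝ → ℝ := fun x => Real.log (Real.Gamma x) with hf
  have h1 : deriv (fun y => f (y + 1)) x = deriv f (x + 1) := deriv_comp_add_const f 1 x
  have heq : (fun y => f (y + 1)) =ᶠ[nhds x] (fun y => Real.log y + f y) := by
    filter_upwards [eventually_gt_nhds hx] with y hy
    simp only [hf, Real.Gamma_add_one hy.ne',
      Real.log_mul hy.ne' (Real.Gamma_pos_of_pos hy).ne']
  have h2 : deriv (fun y => f (y + 1)) x = deriv (fun y => Real.log y + f y) x :=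
    heq.deriv_eq
  have h3 : deriv (fun y => Real.log y + f y) x = 1 / x + deriv f x := by
    rw [deriv_fun_add (Real.differentiableAt_log hx.ne') (diffLG hx), Real.deriv_log,
      one_div]
  rw [← h1, h2, h3, add_comm]

private lemma telescope (α : ℝ) (hα : 0 < α) (n : ℕ) :
    deriv (fun x => Real.log (Real.Gamma x)) (α + n)
      = deriv (fun x => Real.log (Real.Gamma x)) α
        + ∑ k ∈ Finset.range n, 1 / (α + (k : ℝ)) := by
  induction n with
  | zero => simp
  | succ n ih =>
    have hpos : 0 < α + (n : ℝ) := by positivity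
    have : (α : ℝ) + (n + 1 : ℕ) = (α + n) + 1 := by push_cast; ring
    rw [this, rec_step hpos, ih, Finset.sum_range_succ]
    ring

theorem stmt_13 (ψ : ℝ → ℝ) (hψ : ψ = deriv (fun x => Real.log (Real.Gamma x)))
    (α β : ℝ) (hα : 0 < α) (hβ : 0 < β) :
    ψ (α + β) - ψ α ≤ ∑ k ∈ Finset.range (⌊β⌋₊ + 1), 1 / (α + (k : ℝ)) := by
  subst hψ
  set f : ℝ → ℝ := fun x => Real.log (Real.Gamma x) with hf
  have hmono : MonotoneOn (deriv f) (Set.Ioi 0) :=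
    Real.convexOn_log_Gamma.monotoneOn_deriv fun x hx => diffLG hx
  have hle : α + β ≤ α + (⌊β⌋₊ + 1 : ℕ) := by
    push_cast
    linarith [Nat.lt_floor_add_one β]
  have h1 : deriv f (α + β) ≤ deriv f (α + (⌊β⌋₊ + 1 : ℕ)) :=
    hmono (by simp [Set.mem_Ioi]; positivity)
      (by simp [Set.mem_Ioi]; positivity) hle
  have h2 := telescope α hα (⌊β⌋₊ + 1)
  linarith
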